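/- Let q be an odd prime power, m ≥ 1, and for z ∈ F_q let E_z = {x ∈ F_q^m : x₁² + ... + x_m² = z}. Then for every z, ||E_z| − q^{m−1}| ≤ q^{m/2}. In particular, if q^{m/2 - 1} ≥ 2 then q^m/(2q) < |E_z| < 2q^m/q. -/

import Mathlib

open Finset

private lemma addChar_map_sum {A M : Type*} [AddCommMonoid A] [CommMonoid M] {ι : Type*}
    (ψ : AddChar A M) (s : Finset ι) (f : ι → A) :
    ψ (∑ i ∈ s, f i) = ∏ i ∈ s, ψ (f i) := by
  classical
  induction s using Finset.cons_induction with
  | empty => simp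
  | cons a s ha ih =>
      rw [Finset.sum_cons, Finset.prod_cons, AddChar.map_add_eq_mul, ih]

private lemma abs_gauss_sq_sum {F : Type*} [Field F] [Fintype F] [DecidableEq F]
    (hF : ringChar F ≠ 2) {ψ : AddChar F ℂ} (hψ : ψ.IsPrimitive) {b : F} (hb : b ≠ 0) :
    ‖∑ x : F, ψ (b * x ^ 2)‖ = Real.sqrt (Fintype.card F) := by
  set χ : MulChar F ℂ := (quadraticChar F).ringHomComp (Int.castRingHom ℂ) with hχdef
  have hχ1 : χ ≠ 1 := fun h => quadraticChar_ne_one hF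
      ((MulChar.ringHomComp_eq_one_iff Int.cast_injective).mp h)
  have hχq : χ.IsQuadratic := (quadraticChar_isQuadratic F).comp _
  have hψb : (ψ.mulShift b).IsPrimitive := AddChar.IsPrimitive.of_ne_one (hψ hb)
  have hcard : ∀ t : F, ((univ.filter (fun x : F => x ^ 2 = t)).card : ℂ) = χ t + 1 := by
    intro t
    have h0 := quadraticChar_card_sqrts hF t
    rw [Set.toFinset_setOf] at h0
    have h1 : ((univ.filter (fun x : F => x ^ 2 = t)).card : ℤ) = quadraticChar F t + 1 := h0
    have h2 := congrArg (fun n : ℤ => (n : ℂ)) h1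
    push_cast at h2 ⊢
    simpa [hχdef, MulChar.ringHomComp] using h2
  have key : ∑ x : F, ψ (b * x ^ 2) = gaussSum χ (ψ.mulShift b) := by
    have h1 : ∑ x : F, ψ (b * x ^ 2)
        = ∑ t : F, ∑ x ∈ univ.filter (fun x : F => x ^ 2 = t), ψ (b * x ^ 2) :=
      (Finset.sum_fiberwise_of_maps_to (g := fun x : F => x ^ 2)
        (fun x _ => mem_univ _) (fun x => ψ (b * x ^ 2))).symm
    have h2 : ∀ t : F, ∑ x ∈ univ.filter (fun x : F => x ^ 2 = t), ψ (b * x ^ 2)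
        = (χ t + 1) * ψ (b * t) := by
      intro t
      rw [Finset.sum_congr rfl (fun x hx => by
        rw [(Finset.mem_filter.mp hx).2]), Finset.sum_const, nsmul_eq_mul, hcard]
    have h3 : ∀ t : F, (χ t + 1) * ψ (b * t) = χ t * ψ (t * b) + ψ (t * b) := by
      intro t; rw [mul_comm b t]; ring
    rw [h1, Finset.sum_congr rfl fun t _ => h2 t, Finset.sum_congr rfl fun t _ => h3 t,
      Finset.sum_add_distrib, AddChar.sum_mulShift b hψ, if_neg hb]
    push_cast
    rw [add_zero]
    simp only [gaussSum, AddChar.mulShift_apply]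
    exact Finset.sum_congr rfl fun t _ => by rw [mul_comm b t]
  have hsq : gaussSum χ (ψ.mulShift b) ^ 2 = χ (-1) * (Fintype.card F : ℂ) :=
    gaussSum_sq hχ1 hχq hψb
  have habsneg : ‖χ (-1)‖ = 1 := by
    have h := quadraticChar_dichotomy (a := (-1 : F)) (neg_ne_zero.mpr one_ne_zero)
    have he : χ (-1) = ((quadraticChar F (-1) : ℤ) : ℂ) := rfl
    rcases h with h | h <;> simp [he, h]
  have habs2 : ‖∑ x : F, ψ (b * x ^ 2)‖ ^ 2 = (Fintype.card F : ℝ) := by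
    rw [key, ← norm_pow, hsq, norm_mul, habsneg, one_mul, Complex.norm_natCast]
  rw [← Real.sqrt_sq (norm_nonneg _), habs2]

private lemma count_identity {F : Type*} [Field F] [Fintype F] [DecidableEq F]
    {ψ : AddChar F ℂ} (hψ : ψ.IsPrimitive) (m : ℕ) (z : F) :
    ((univ.filter (fun x : Fin m → F => ∑ i, x i ^ 2 = z)).card : ℂ) * (Fintype.card F : ℂ)
      = ∑ y : F, ψ (-(y * z)) * (∑ x : F, ψ (y * x ^ 2)) ^ m := by
  classical
  have h1 : ((univ.filter (fun x : Fin m → F => ∑ i, x i ^ 2 = z)).card : ℂ)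
        * (Fintype.card F : ℂ)
      = ∑ x : Fin m → F, (if (∑ i, x i ^ 2) = z then (Fintype.card F : ℂ) else 0) := by
    rw [← Finset.sum_filter, Finset.sum_const, nsmul_eq_mul]
  have h2 : ∀ x : Fin m → F, (if (∑ i, x i ^ 2) = z then (Fintype.card F : ℂ) else 0)
      = ∑ y : F, ψ (y * ((∑ i, x i ^ 2) - z)) := by
    intro x
    rw [AddChar.sum_mulShift _ hψ]
    push_cast
    by_cases h : (∑ i, x i ^ 2) = z
    · rw [if_pos h, if_pos (by rw [h, sub_self])]
    · rw [if_neg h, if_neg (fun hc => h (by rwa [sub_eq_zero] at hc))]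
  have h3 : ∀ y : F, ∑ x : Fin m → F, ψ (y * ((∑ i, x i ^ 2) - z))
      = ψ (-(y * z)) * (∑ x : F, ψ (y * x ^ 2)) ^ m := by
    intro y
    have e1 : ∀ x : Fin m → F, ψ (y * ((∑ i, x i ^ 2) - z))
        = ψ (-(y * z)) * ∏ i, ψ (y * x i ^ 2) := by
      intro x
      rw [show y * ((∑ i, x i ^ 2) - z) = -(y * z) + ∑ i, y * x i ^ 2 by
        rw [mul_sub, Finset.mul_sum]; ring, AddChar.map_add_eq_mul, addChar_map_sum]
    rw [Finset.sum_congr rfl fun x _ => e1 x, ← Finset.mul_sum]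
    congr 1
    rw [show (∑ x : F, ψ (y * x ^ 2)) ^ m = ∏ _i : Fin m, ∑ x : F, ψ (y * x ^ 2) by
      rw [Finset.prod_const, Finset.card_univ, Fintype.card_fin],
      Finset.prod_univ_sum, Fintype.piFinset_univ]
  rw [h1, Finset.sum_congr rfl fun x _ => h2 x, Finset.sum_comm]
  exact Finset.sum_congr rfl fun y _ => h3 y

theorem stmt10 (F : Type*) [Field F] [Fintype F] [DecidableEq F]
    (hodd : Odd (Fintype.card F)) (m : ℕ) (hm : 1 ≤ m) (z : F) :
    |((univ.filter (fun x : Fin m → F => ∑ i, x i ^ 2 = z)).card : ℝ) -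
        (Fintype.card F : ℝ) ^ (m - 1)| ≤ (Fintype.card F : ℝ) ^ ((m : ℝ) / 2) ∧
    (2 ≤ (Fintype.card F : ℝ) ^ ((m : ℝ) / 2 - 1) →
      (Fintype.card F : ℝ) ^ m / (2 * Fintype.card F) <
          ((univ.filter (fun x : Fin m → F => ∑ i, x i ^ 2 = z)).card : ℝ) ∧
        ((univ.filter (fun x : Fin m → F => ∑ i, x i ^ 2 = z)).card : ℝ) <
          2 * (Fintype.card F : ℝ) ^ m / Fintype.card F) := by
  classical
  have hq0 : 0 < Fintype.card F := Fintype.card_pos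
  have hF2 : ringChar F ≠ 2 := by
    intro h
    have := FiniteField.even_card_of_char_two h
    rcases hodd with ⟨k, hk⟩
    omega
  have hRpos : 0 < ringChar F :=
    Nat.pos_of_ne_zero (CharP.ringChar_ne_zero_of_finite F)
  obtain ⟨ψ, hψ⟩ : ∃ ψ : AddChar F ℂ, ψ.IsPrimitive :=
    ⟨AddChar.FiniteField.primitiveChar_to_Complex F,
      AddChar.FiniteField.primitiveChar_to_Complex_isPrimitive F⟩
  have habs1 : ∀ a : F, ‖ψ a‖ = 1 := fun a =>
    Complex.norm_eq_one_of_mem_rootsOfUnity <| ψ.val_mem_rootsOfUnity a hRpos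
  set q : ℕ := Fintype.card F with hqdef
  set N : ℕ := (univ.filter (fun x : Fin m → F => ∑ i, x i ^ 2 = z)).card with hNdef
  have key := count_identity hψ m z
  have hS0 : (∑ x : F, ψ ((0 : F) * x ^ 2)) = (q : ℂ) := by
    simp [Finset.card_univ, hqdef]
  have hterm0 : ψ (-((0 : F) * z)) * (∑ x : F, ψ ((0 : F) * x ^ 2)) ^ m = (q : ℂ) ^ m := by
    rw [hS0, zero_mul, neg_zero, AddChar.map_zero_eq_one, one_mul]
  have hsplit : (N : ℂ) * q - (q : ℂ) ^ m
      = ∑ y ∈ univ.erase (0 : F), ψ (-(y * z)) * (∑ x : F, ψ (y * x ^ 2)) ^ m := by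
    rw [key, ← Finset.add_sum_erase univ _ (mem_univ (0 : F)), hterm0]
    ring
  have hbound : ‖(N : ℂ) * q - (q : ℂ) ^ m‖
      ≤ ((q : ℝ) - 1) * Real.sqrt q ^ m := by
    rw [hsplit]
    calc ‖∑ y ∈ univ.erase (0 : F), ψ (-(y * z)) * (∑ x : F, ψ (y * x ^ 2)) ^ m‖
        ≤ ∑ y ∈ univ.erase (0 : F),
            ‖ψ (-(y * z)) * (∑ x : F, ψ (y * x ^ 2)) ^ m‖ := by
          exact norm_sum_le _ _
      _ = ∑ y ∈ univ.erase (0 : F), Real.sqrt q ^ m := by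
          refine Finset.sum_congr rfl fun y hy => ?_
          have hy0 : y ≠ 0 := Finset.ne_of_mem_erase hy
          rw [norm_mul, norm_pow, habs1, one_mul, abs_gauss_sq_sum hF2 hψ hy0]
      _ = ((q : ℝ) - 1) * Real.sqrt q ^ m := by
          rw [Finset.sum_const, Finset.card_erase_of_mem (mem_univ _), Finset.card_univ,
            nsmul_eq_mul]
          push_cast [← hqdef, Nat.cast_sub hq0]
          ring
  have hqm : ((q : ℝ) ^ (m - 1)) * q = (q : ℝ) ^ m := by
    rw [← pow_succ, Nat.sub_add_cancel hm]
  have hreal : |(N : ℝ) - (q : ℝ) ^ (m - 1)| * q ≤ ((q : ℝ) - 1) * Real.sqrt q ^ m := by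
    have h1 : ‖(N : ℂ) * q - (q : ℂ) ^ m‖
        = |(N : ℝ) * q - (q : ℝ) ^ m| := by
      rw [show ((N : ℂ) * q - (q : ℂ) ^ m) = (((N : ℝ) * q - (q : ℝ) ^ m : ℝ) : ℂ) by
        push_cast; ring, Complex.norm_real, Real.norm_eq_abs]
    have h2 : (N : ℝ) * q - (q : ℝ) ^ m = ((N : ℝ) - (q : ℝ) ^ (m - 1)) * q := by
      rw [sub_mul, hqm]
    rw [h1, h2, abs_mul, abs_of_nonneg (by positivity : (0:ℝ) ≤ (q:ℝ))] at hbound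
    exact hbound
  have hq1 : (1 : ℝ) ≤ (q : ℝ) := by exact_mod_cast hq0
  have hqR : (0 : ℝ) < (q : ℝ) := by positivity
  have hsqrt : Real.sqrt q ^ m = (q : ℝ) ^ ((m : ℝ) / 2) := by
    rw [Real.sqrt_eq_rpow, ← Real.rpow_natCast ((q : ℝ) ^ (1 / 2 : ℝ)) m,
      ← Real.rpow_mul (le_of_lt hqR)]
    ring_nf
  have hPpos : (0 : ℝ) < (q : ℝ) ^ ((m : ℝ) / 2) := Real.rpow_pos_of_pos hqR _
  have hmain : |(N : ℝ) - (q : ℝ) ^ (m - 1)|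
      ≤ (((q : ℝ) - 1) / q) * (q : ℝ) ^ ((m : ℝ) / 2) := by
    rw [div_mul_eq_mul_div, le_div_iff₀ hqR]
    rw [hsqrt] at hreal
    exact hreal
  have hfrac : (((q : ℝ) - 1) / q) < 1 := by
    rw [div_lt_one hqR]; linarith
  have hfrac0 : 0 ≤ ((q : ℝ) - 1) / q := div_nonneg (by linarith) (le_of_lt hqR)
  constructor
  · refine hmain.trans ?_
    calc (((q : ℝ) - 1) / q) * (q : ℝ) ^ ((m : ℝ) / 2)
        ≤ 1 * (q : ℝ) ^ ((m : ℝ) / 2) :=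
          mul_le_mul_of_nonneg_right (le_of_lt hfrac) (le_of_lt hPpos)
      _ = (q : ℝ) ^ ((m : ℝ) / 2) := one_mul _
  · intro h2
    have hAdef : (q : ℝ) ^ ((m : ℝ) - 1) = (q : ℝ) ^ (m - 1) := by
      rw [show (m : ℝ) - 1 = ((m - 1 : ℕ) : ℝ) by
        rw [Nat.cast_sub hm]; norm_num, Real.rpow_natCast]
    have hA2 : 2 * (q : ℝ) ^ ((m : ℝ) / 2) ≤ (q : ℝ) ^ (m - 1) := by
      have := mul_le_mul_of_nonneg_right h2 (le_of_lt hPpos)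
      rwa [← Real.rpow_add hqR, show (m : ℝ) / 2 - 1 + (m : ℝ) / 2 = (m : ℝ) - 1 by ring,
        hAdef] at this
    have hApos : (0 : ℝ) < (q : ℝ) ^ (m - 1) := by positivity
    have hstrict : |(N : ℝ) - (q : ℝ) ^ (m - 1)| < (q : ℝ) ^ (m - 1) / 2 := by
      calc |(N : ℝ) - (q : ℝ) ^ (m - 1)|
          ≤ (((q : ℝ) - 1) / q) * (q : ℝ) ^ ((m : ℝ) / 2) := hmain
        _ < 1 * (q : ℝ) ^ ((m : ℝ) / 2) := mul_lt_mul_of_pos_right hfrac hPpos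
        _ = (q : ℝ) ^ ((m : ℝ) / 2) := one_mul _
        _ ≤ (q : ℝ) ^ (m - 1) / 2 := by linarith
    rw [abs_lt] at hstrict
    have hq0' : (q : ℝ) ≠ 0 := ne_of_gt hqR
    have e1 : (q : ℝ) ^ m / (2 * q) = (q : ℝ) ^ (m - 1) / 2 := by
      rw [← hqm]; field_simp
    have e2 : 2 * (q : ℝ) ^ m / q = 2 * (q : ℝ) ^ (m - 1) := by
      rw [← hqm]; field_simp
    constructor
    · rw [e1]; linarith [hstrict.1]
    · rw [e2]; linarith [hstrict.2]
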